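/- Let Γ be a torsionfree group acting by ℤ-algebra automorphisms on a commutative ℤ-algebra D generated by idempotents. Then there exist a Γ-semilattice E such that Γ acts freely on E× (i.e., τ_g(e) = e for some e ∈ E× implies g = 1) and a surjective Γ-equivariant ℤ-algebra homomorphism φ: ℤ[E×] → D. -/

import Mathlib

set_option linter.unusedSectionVars false

/-- A monoid is torsion-free if no nontrivial element has finite order (the meaning of
Mathlib's former `Monoid.IsTorsionFree`, which has been removed). -/
def Monoid.IsTorsionFree (G : Type*) [Monoid G] : Prop :=
  ∀ g : G, g ≠ 1 → ¬IsOfFinOrder g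

/-- A *semilattice with zero*: a commutative idempotent semigroup with an
absorbing element `0`. -/
class SemilatticeWithZero (E : Type) extends CommSemigroup E, Zero E where
  mul_idem : ∀ e : E, e * e = e
  zero_mul : ∀ e : E, 0 * e = 0

namespace IndRes

variable {E : Type} [SemilatticeWithZero E]

/-- `single e c`, viewed in the semigroup algebra `ℤ[E]`. -/
noncomputable def sgl (e : E) (c : ℤ) : MonoidAlgebra ℤ E := MonoidAlgebra.ofCoeff (Finsupp.single e c)

/-- Truncation map deleting the coefficient at `0`. -/
noncomputable def T (x : MonoidAlgebra ℤ E) : MonoidAlgebra ℤ E := x - sgl 0 (x.coeff 0)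

lemma sgl_apply_self (e : E) (c : ℤ) : (sgl e c).coeff e = c := Finsupp.single_eq_same

lemma sgl_apply_ne (e d : E) (c : ℤ) (h : e ≠ d) : (sgl e c).coeff d = 0 := Finsupp.single_eq_of_ne h.symm

lemma sgl_add (e : E) (c d : ℤ) : sgl e (c + d) = sgl e c + sgl e d := by
  unfold sgl; rw [Finsupp.single_add, MonoidAlgebra.ofCoeff_add]

lemma sgl_sub (e : E) (c d : ℤ) : sgl e (c - d) = sgl e c - sgl e d := by
  unfold sgl; rw [Finsupp.single_sub, MonoidAlgebra.ofCoeff_sub]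

lemma T_apply_zero (x : MonoidAlgebra ℤ E) : (T x).coeff 0 = 0 := by
  show ((x - sgl 0 (x.coeff 0) : MonoidAlgebra ℤ E)).coeff 0 = 0
  rw [MonoidAlgebra.coeff_sub, Finsupp.sub_apply, sgl_apply_self, sub_self]

/-- `ℤ[E^×]`, realized as the additive subgroup of the semigroup algebra
`ℤ[E]` consisting of the elements whose coefficient at `0` vanishes; it is the free
`ℤ`-module with basis `E^× = E \ {0}`. -/
noncomputable def ZS (E : Type) [SemilatticeWithZero E] : AddSubgroup (MonoidAlgebra ℤ E) where
  carrier := {x | x.coeff 0 = 0}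
  zero_mem' := rfl
  add_mem' := by
    intro a b ha hb
    simp only [Set.mem_setOf_eq] at *
    rw [MonoidAlgebra.coeff_add, Finsupp.add_apply, ha, hb, add_zero]
  neg_mem' := by
    intro a ha
    simp only [Set.mem_setOf_eq] at *
    rw [MonoidAlgebra.coeff_neg, Finsupp.neg_apply, ha, neg_zero]

/-- The integral semigroup ring `ℤ[E^×]`. -/
abbrev ZE (E : Type) [SemilatticeWithZero E] : Type := ↥(ZS E)

lemma mem_ZS {x : MonoidAlgebra ℤ E} : x ∈ ZS E ↔ x.coeff 0 = 0 := Iff.rfl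

lemma T_eq_self {x : MonoidAlgebra ℤ E} (h : x.coeff 0 = 0) : T x = x := by
  simp [T, h, sgl]

lemma T_add (a b : MonoidAlgebra ℤ E) : T (a + b) = T a + T b := by
  unfold T
  rw [show ((a + b).coeff 0) = a.coeff 0 + b.coeff 0 from Finsupp.add_apply a.coeff b.coeff 0, sgl_add]
  abel

lemma T_sub_sgl (x : MonoidAlgebra ℤ E) (m : ℤ) : T (x - sgl 0 m) = T x := by
  unfold T
  have h : ((x - sgl 0 m : MonoidAlgebra ℤ E)).coeff 0 = x.coeff 0 - m := by
    rw [MonoidAlgebra.coeff_sub, Finsupp.sub_apply, sgl_apply_self]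
  rw [h, sgl_sub]
  abel

lemma single_zero_mul (c : ℤ) (b : MonoidAlgebra ℤ E) :
    (sgl 0 c) * b = sgl 0 (((sgl 0 c * b : MonoidAlgebra ℤ E)).coeff 0) := by
  classical
  ext d
  by_cases hd : d = 0
  · subst hd; rw [sgl_apply_self]
  · rw [sgl_apply_ne 0 d _ (Ne.symm hd)]
    by_contra h
    have hmem : d ∈ ((sgl (0:E) c) * b).coeff.support := Finsupp.mem_support_iff.mpr h
    have h2 := MonoidAlgebra.support_coeff_mul_subset (sgl (0:E) c) b hmem
    rw [Finset.mem_mul] at h2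
    obtain ⟨a, ha, b', _, hab⟩ := h2
    have ha' : a = 0 := by
      have := Finsupp.support_single_subset (ha : a ∈ (Finsupp.single (0:E) c).support)
      simpa using this
    exact hd (by rw [← hab, ha', SemilatticeWithZero.zero_mul])

lemma T_mul_left (a b : MonoidAlgebra ℤ E) : T (T a * b) = T (a * b) := by
  have h1 : T a * b = a * b - (sgl 0 (a.coeff 0)) * b := by rw [T, sub_mul]
  rw [h1, single_zero_mul, T_sub_sgl]

lemma T_mul_right (a b : MonoidAlgebra ℤ E) : T (a * T b) = T (a * b) := by
  rw [mul_comm a (T b), T_mul_left, mul_comm]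

noncomputable instance : Mul (ZE E) :=
  ⟨fun x y => ⟨T (x.1 * y.1), T_apply_zero _⟩⟩

lemma ZE.val_mul (x y : ZE E) : (x * y).1 = T (x.1 * y.1) := rfl

noncomputable instance : NonUnitalCommRing (ZE E) :=
  { (inferInstance : AddCommGroup (ZE E)) with
    mul := (· * ·)
    left_distrib := by
      intro x y z
      apply Subtype.ext
      show T (x.1 * (y.1 + z.1)) = T (x.1 * y.1) + T (x.1 * z.1)
      rw [mul_add, T_add]
    right_distrib := by
      intro x y z
      apply Subtype.ext
      show T ((x.1 + y.1) * z.1) = T (x.1 * z.1) + T (y.1 * z.1)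
      rw [add_mul, T_add]
    zero_mul := by
      intro x
      apply Subtype.ext
      show T ((0 : MonoidAlgebra ℤ E) * x.1) = 0
      rw [zero_mul]
      simp [T, sgl]
    mul_zero := by
      intro x
      apply Subtype.ext
      show T (x.1 * (0 : MonoidAlgebra ℤ E)) = 0
      rw [mul_zero]
      simp [T, sgl]
    mul_assoc := by
      intro x y z
      apply Subtype.ext
      show T (T (x.1 * y.1) * z.1) = T (x.1 * T (y.1 * z.1))
      rw [T_mul_left, T_mul_right, mul_assoc]
    mul_comm := by
      intro x y
      apply Subtype.ext
      show T (x.1 * y.1) = T (y.1 * x.1)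
      rw [mul_comm] }

/-- The canonical image of `e ∈ E` in `ℤ[E^×]`: the basis element `e` if `e ≠ 0`,
and `0` if `e = 0`. -/
noncomputable def elt (e : E) : ZE E := ⟨T (sgl e 1), T_apply_zero _⟩

/-- Product of a (nonempty) finite family in a commutative non-unital ring, computed inside
the unitization.  For a nonempty index set this is the iterated product. -/
noncomputable def nprod {ι A : Type} [NonUnitalCommRing A] (s : Finset ι) (f : ι → A) : A :=
  (∏ j ∈ s, (Unitization.inr (f j) : Unitization ℤ A)).snd

/-- The join `⋁_{j ∈ J} x_j = ∑_{∅ ≠ J' ⊆ J} (-1)^{|J'|+1} ∏_{j ∈ J'} x_j`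
of a finite family of idempotents of a commutative non-unital ring. -/
noncomputable def rjoin {ι A : Type} [NonUnitalCommRing A] (s : Finset ι) (f : ι → A) : A :=
  ∑ t ∈ s.powerset.filter (fun t => t.Nonempty), ((-1 : ℤ) ^ (t.card + 1)) • nprod t f

/-- The join `⋁_{j ∈ J} e_j ∈ ℤ[E^×]` of a finite family of elements of `E`:
`∑_{∅ ≠ J' ⊆ J} (-1)^{|J'|+1} ∏_{j ∈ J'} e_j`, where a product whose value in `E`
is `0` contributes `0`. -/
noncomputable def join {ι : Type} (s : Finset ι) (e : ι → E) : ZE E :=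
  rjoin s (fun j => elt (e j))

/-- Iterated product of a nonempty list in a semigroup with zero (the value on the
empty list is the junk value `0`). -/
def listProd : List E → E
  | [] => 0
  | [a] => a
  | a :: b :: l => a * listProd (b :: l)

/-- The product `∏_{j ∈ s} f j ∈ E` of a (nonempty) finite family. -/
noncomputable def eprod {ι : Type} (s : Finset ι) (f : ι → E) : E :=
  listProd (s.toList.map f)

/-- The support `E(x)` of `x ∈ ℤ[E^×]`: the finite set of elements of `E^×` appearing
with a nonzero coefficient in the reduced form of `x`. -/
noncomputable def supp (x : ZE E) : Finset E := x.1.coeff.support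

section Action

variable {Γ : Type} [Group Γ] [MulAction Γ E]

/-- The induced action of `g ∈ Γ` on `ℤ[E^×]`: the `ℤ`-linear map sending a basis
element `e ∈ E^×` to `g • e`.  (When the action fixes `0` — which is the case for an
action by semigroup automorphisms fixing `0` — the truncation `T` is a no-op, and this
is the automorphism of `ℤ[E^×]` induced by `τ_g`.) -/
noncomputable def act (g : Γ) (x : ZE E) : ZE E :=
  ⟨T (MonoidAlgebra.mapDomain (fun e : E => g • e) x.1), T_apply_zero _⟩

end Action



attribute [local instance] Classical.propDecidable

variable {E : Type} [SemilatticeWithZero E]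

/-- A Γ-semilattice structure: the group acts by semigroup automorphisms fixing `0`. -/
def IsGammaSL (Γ E : Type) [Group Γ] [SemilatticeWithZero E] [MulAction Γ E] : Prop :=
  (∀ (g : Γ) (x y : E), g • (x * y) = (g • x) * (g • y)) ∧ (∀ g : Γ, g • (0 : E) = 0)

/-- The set `E_φ`. -/
def Ephi {D : Type} [NonUnitalCommRing D] (φ : ZE E →ₙ+* D) : Set (ZE E) :=
  { x | ∃ (e : E) (J : Finset E), e ≠ 0 ∧ (∀ f ∈ J, f ≠ 0 ∧ f * e = f ∧ f ≠ e) ∧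
      x = elt e - join J (fun f => f) ∧
      φ (elt e) = rjoin J (fun f => φ (elt f)) }

/-- `R` is a finite cover for `e ∈ E^×`. -/
def IsCover (e : E) (R : Finset E) : Prop :=
  (∀ f ∈ R, f ≠ 0 ∧ f * e = f) ∧
  ∀ f' : E, f' ≠ 0 → f' * e = f' → ∃ f ∈ R, f' * f ≠ 0

/-- `ℛ` is a collection of finite covers for `E`. -/
def CovSystem (ℛ : E → Set (Finset E)) : Prop :=
  ∀ e : E, e ≠ 0 → ∀ R ∈ ℛ e, IsCover e R

/-- Condition (i). -/
def CondI (ℛ : E → Set (Finset E)) : Prop :=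
  ∀ d e : E, d ≠ 0 → e ≠ 0 → d * e ≠ 0 → ∀ R ∈ ℛ e,
    d * e ∈ (R.image (fun f => d * f)).erase 0 ∨ (R.image (fun f => d * f)).erase 0 ∈ ℛ (d * e)

/-- Condition (ii). -/
def CondII (ℛ : E → Set (Finset E)) : Prop :=
  ∀ e : E, e ≠ 0 → ∀ r : ℕ, 0 < r → ∀ Rs : Fin r → Finset E,
    Function.Injective Rs → (∀ i, Rs i ∈ ℛ e) → ∀ ε : Fin r → E,
    (∀ i, ε i ∈ supp (join (Rs i) (fun f => f))) → ∀ j : Fin r,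
      (if r = 1 then e else eprod (Finset.univ.erase j) ε) ≠ 0 →
      eprod Finset.univ ε * (if r = 1 then e else eprod (Finset.univ.erase j) ε)
          = eprod Finset.univ ε ∧
      eprod Finset.univ ε ≠ (if r = 1 then e else eprod (Finset.univ.erase j) ε)

/-- Condition (iii). -/
def CondIII (Γ : Type) [Group Γ] [MulAction Γ E] (ℛ : E → Set (Finset E)) : Prop :=
  ∀ (g : Γ) (e : E), e ≠ 0 →
    (fun R : Finset E => R.image (fun f => g • f)) '' (ℛ e) = ℛ (g • e)

/-- `e(𝒮) = ∏_{R ∈ 𝒮} (e - ⋁R) ∈ ℤ[E^×]`. -/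
noncomputable def eS (e : E) (S : Finset (Finset E)) : ZE E :=
  nprod S (fun R => elt e - join R (fun f => f))

/-- `E(E,ℛ) = {e(𝒮) : e ∈ E^×, 𝒮 ⊆ ℛ(e) nonempty finite} ∪ {0} ⊆ ℤ[E^×]`. -/
def EER (ℛ : E → Set (Finset E)) : Set (ZE E) :=
  {x | ∃ (e : E) (S : Finset (Finset E)), e ≠ 0 ∧ S.Nonempty ∧ ↑S ⊆ ℛ e ∧ x = eS e S} ∪ {0}

/-- `R(𝒮,R̃) = {e(𝒮 ∪ {R̃})} ∪ {f ⬝ e(𝒮) : f ∈ R̃, f ⬝ e(𝒮) ≠ 0}`. -/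
noncomputable def RSR (e : E) (S : Finset (Finset E)) (Rt : Finset E) : Finset (ZE E) :=
  insert (eS e (insert Rt S)) ((Rt.image (fun f => elt f * eS e S)).erase 0)

/-- The collection of finite covers `ℛ(E,ℛ)` on `E(E,ℛ)`, assigning to an element
`x = e(𝒮)` of `E(E,ℛ)^×` the covers `R(𝒮,R̃)`, `R̃ ∈ ℛ(e) ∖ 𝒮` (over all ways of
presenting `x` in the form `e(𝒮)`). -/
def RER (ℛ : E → Set (Finset E)) (x : ZE E) : Set (Finset (ZE E)) :=
  {C | ∃ (e : E) (S : Finset (Finset E)) (Rt : Finset E),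
        e ≠ 0 ∧ S.Nonempty ∧ ↑S ⊆ ℛ e ∧ Rt ∈ ℛ e ∧ Rt ∉ S ∧ x = eS e S ∧ C = RSR e S Rt}

/-- The `ℤ`-linear map `ℤ[E₁^×] → ℤ[E₂^×]` induced by a map `θ` from `E₁` to `ℤ[E₂^×]`,
sending a basis element `e' ∈ E₁^×` to `θ e'`. -/
noncomputable def indMap {E₁ E₂ : Type} [SemilatticeWithZero E₁] [SemilatticeWithZero E₂]
    (θ : E₁ → ZE E₂) : ZE E₁ →ₗ[ℤ] ZE E₂ :=
  (Finsupp.linearCombination ℤ θ).comp ((MonoidAlgebra.coeffAddEquiv.toAddMonoidHom.comp (ZS E₁).subtype).toIntLinearMap)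

/-- `(E₁, ℛ₁, θ)` is a realization of the construction `(E(E,ℛ), ℛ(E,ℛ))`:
`θ` identifies the abstract Γ-semilattice `E₁` with `E(E,ℛ) ⊆ ℤ[E^×]` (equivariantly,
multiplicatively and preserving `0`), and `ℛ₁` corresponds to `ℛ(E,ℛ)` under this
identification. -/
def Realizes {Γ E E₁ : Type} [Group Γ] [SemilatticeWithZero E] [MulAction Γ E]
    [SemilatticeWithZero E₁] [MulAction Γ E₁]
    (ℛ : E → Set (Finset E)) (ℛ₁ : E₁ → Set (Finset E₁)) (θ : E₁ → ZE E) : Prop :=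
  Function.Injective θ ∧ Set.range θ = EER ℛ ∧ θ 0 = 0 ∧
  (∀ x y : E₁, θ (x * y) = θ x * θ y) ∧
  (∀ (g : Γ) (x : E₁), θ (g • x) = act g (θ x)) ∧
  (∀ e' : E₁, e' ≠ 0 → ∀ C : Finset E₁, C ∈ ℛ₁ e' ↔ C.image θ ∈ RER ℛ (θ e'))

end IndRes

open IndRes

namespace S7

attribute [local instance] Classical.propDecidable

variable {Γ D : Type} [Group Γ] [NonUnitalCommRing D]

abbrev Jd (D : Type) [NonUnitalCommRing D] : Type := {d : D // d * d = d}

/-- The underlying type of our semilattice. -/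
def EE (Γ D : Type) [Group Γ] [NonUnitalCommRing D] : Type := Finset (Γ × Jd D)

noncomputable def emul (S T : Finset (Γ × Jd D)) : Finset (Γ × Jd D) :=
  if S = ∅ ∨ T = ∅ then ∅ else S ∪ T

lemma emul_comm (S T : Finset (Γ × Jd D)) : emul S T = emul T S := by
  unfold emul
  by_cases hS : S = ∅ <;> by_cases hT : T = ∅ <;> simp [hS, hT, Finset.union_comm]

lemma emul_assoc (S T U : Finset (Γ × Jd D)) : emul (emul S T) U = emul S (emul T U) := by
  unfold emul
  by_cases hS : S = ∅ <;> by_cases hT : T = ∅ <;> by_cases hU : U = ∅ <;>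
    simp [hS, hT, hU, Finset.union_eq_empty, Finset.union_assoc]

lemma emul_idem (S : Finset (Γ × Jd D)) : emul S S = S := by
  unfold emul
  by_cases hS : S = ∅ <;> simp [hS]

lemma emul_zero (S : Finset (Γ × Jd D)) : emul ∅ S = ∅ := by simp [emul]

noncomputable instance : SemilatticeWithZero (EE Γ D) where
  mul := emul
  mul_assoc := emul_assoc
  mul_comm := emul_comm
  mul_idem := emul_idem
  zero := (∅ : Finset (Γ × Jd D))
  zero_mul := emul_zero

lemma EE.mul_def (S T : EE Γ D) : S * T = emul S T := rfl
lemma EE.zero_def : (0 : EE Γ D) = (∅ : Finset (Γ × Jd D)) := rfl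

def EE.ofF (S : Finset (Γ × Jd D)) : EE Γ D := S

noncomputable instance : MulAction Γ (EE Γ D) where
  smul g S := Finset.image (fun p => (g * p.1, p.2)) (S : Finset (Γ × Jd D))
  one_smul S := by
    show Finset.image (fun p : Γ × Jd D => ((1:Γ) * p.1, p.2)) S = S
    have : (fun p : Γ × Jd D => ((1:Γ) * p.1, p.2)) = id := by
      funext p; simp
    rw [this]; exact Finset.image_id
  mul_smul g h S := by
    show Finset.image (fun p : Γ × Jd D => (g * h * p.1, p.2)) S
        = Finset.image (fun p : Γ × Jd D => (g * p.1, p.2))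
            (Finset.image (fun p : Γ × Jd D => (h * p.1, p.2)) S)
    refine Eq.trans ?_ (Finset.image_image (s := (S : Finset (Γ × Jd D)))).symm
    congr 1
    funext p
    simp [mul_assoc]

lemma EE.smul_def (g : Γ) (S : EE Γ D) :
    g • S = Finset.image (fun p => (g * p.1, p.2)) (S : Finset (Γ × Jd D)) := rfl

lemma EE.isGammaSL : IsGammaSL Γ (EE Γ D) := by
  constructor
  · intro g S T
    rw [EE.smul_def, EE.mul_def, EE.mul_def, EE.smul_def, EE.smul_def]
    unfold emul
    by_cases hS : S = (∅ : Finset (Γ × Jd D)) <;> by_cases hT : T = (∅ : Finset (Γ × Jd D)) <;>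
      simp [hS, hT, Finset.image_union, Finset.image_eq_empty, EE]
    rw [if_neg (by tauto), if_neg (not_or.mpr ⟨fun h => hS (Finset.image_eq_empty.mp h),
      fun h => hT (Finset.image_eq_empty.mp h)⟩)]
    exact Finset.image_union _ _
  · intro g
    rw [EE.smul_def, EE.zero_def]
    exact Finset.image_empty _

lemma free_aux (hTF : Monoid.IsTorsionFree Γ) (g : Γ) (S : Finset (Γ × Jd D))
    (hS : S ≠ ∅) (hfix : Finset.image (fun p : Γ × Jd D => (g * p.1, p.2)) S = S) :
    g = 1 := by
  obtain ⟨p, hp⟩ := Finset.nonempty_iff_ne_empty.mpr hS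
  have hmem : ∀ n : ℕ, (g ^ n * p.1, p.2) ∈ S := by
    intro n
    induction n with
    | zero => simpa using hp
    | succ n ih =>
      have : (g ^ (n+1) * p.1, p.2)
          ∈ Finset.image (fun q : Γ × Jd D => (g * q.1, q.2)) S := by
        refine Finset.mem_image.mpr ⟨(g ^ n * p.1, p.2), ih, ?_⟩
        rw [pow_succ', mul_assoc]
      rwa [hfix] at this
  by_contra hg
  refine hTF g hg ?_
  obtain ⟨m, n, hmn, heq⟩ := Finite.exists_ne_map_eq_of_infinite
    (fun n : ℕ => (⟨(g ^ n * p.1, p.2), hmem n⟩ : {q // q ∈ S}))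
  have hpow : g ^ m = g ^ n := by
    have := congrArg (fun q => (q : {q // q ∈ S}).1.1) heq
    simpa using this
  rw [isOfFinOrder_iff_pow_eq_one]
  have key : ∀ a b : ℕ, a < b → g ^ a = g ^ b → ∃ k, 0 < k ∧ g ^ k = 1 := by
    intro a b hab hloc
    refine ⟨b - a, Nat.sub_pos_of_lt hab, ?_⟩
    have h2 : g ^ (b - a) * g ^ a = 1 * g ^ a := by
      rw [← pow_add, Nat.sub_add_cancel hab.le, ← hloc, one_mul]
    exact mul_right_cancel h2
  rcases hmn.lt_or_gt with h | h
  · exact key m n h hpow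
  · exact key n m h hpow.symm

lemma EE.free (hTF : Monoid.IsTorsionFree Γ) (g : Γ) (S : EE Γ D)
    (hS : S ≠ 0) (hfix : g • S = S) : g = 1 :=
  free_aux hTF g S hS hfix

variable [DistribMulAction Γ D]

noncomputable def Phi (S : Finset (Γ × Jd D)) : D :=
  (∏ p ∈ S, ((p.1 • (p.2 : D) : D) : Unitization ℤ D)).snd

lemma Phi_empty : Phi (∅ : Finset (Γ × Jd D)) = 0 := by
  simp [Phi]

lemma Phi_singleton (p : Γ × Jd D) : Phi {p} = p.1 • (p.2 : D) := by
  simp [Phi]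

lemma inr_Phi {S : Finset (Γ × Jd D)} (hS : S.Nonempty) :
    ((Phi S : D) : Unitization ℤ D) = ∏ p ∈ S, ((p.1 • (p.2 : D) : D) : Unitization ℤ D) := by
  refine Unitization.ext ?_ rfl
  rw [Unitization.fst_inr]
  have : (∏ p ∈ S, ((p.1 • (p.2 : D) : D) : Unitization ℤ D)).fst
      = ∏ p ∈ S, ((p.1 • (p.2 : D) : D) : Unitization ℤ D).fst :=
    map_prod (Unitization.fstHom ℤ D).toMonoidHom _ _
  rw [this]
  simp only [Unitization.fst_inr]
  rw [Finset.prod_const, zero_pow (Finset.card_ne_zero.mpr hS)]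

section Idem

variable {α M : Type} [CommMonoid M] {f : α → M}

lemma prod_insert_idem [DecidableEq α] (hf : ∀ a, f a * f a = f a) (a : α) (s : Finset α) :
    f a * ∏ x ∈ s, f x = ∏ x ∈ Insert.insert a s, f x := by
  by_cases h : a ∈ s
  · rw [Finset.insert_eq_self.mpr h, ← Finset.mul_prod_erase s f h, ← mul_assoc, hf]
  · rw [Finset.prod_insert h]

lemma prod_union_idem [DecidableEq α] (hf : ∀ a, f a * f a = f a) (A B : Finset α) :
    (∏ x ∈ A, f x) * ∏ x ∈ B, f x = ∏ x ∈ A ∪ B, f x := by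
  induction A using Finset.induction_on with
  | empty => simp
  | insert a s h ih =>
    rw [Finset.prod_insert h, mul_assoc, ih, prod_insert_idem hf, Finset.insert_union]

end Idem

variable (hactD : ∀ (g : Γ) (x y : D), g • (x * y) = (g • x) * (g • y))

include hactD in
lemma iota_idem (p : Γ × Jd D) :
    (p.1 • (p.2 : D)) * (p.1 • (p.2 : D)) = p.1 • (p.2 : D) := by
  rw [← hactD, p.2.2]

include hactD in
lemma Phi_union {S T : Finset (Γ × Jd D)} (hS : S.Nonempty) (hT : T.Nonempty) :
    Phi (S ∪ T) = Phi S * Phi T := by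
  apply Unitization.inr_injective (R := ℤ)
  rw [Unitization.inr_mul, inr_Phi (hS.mono Finset.subset_union_left), inr_Phi hS, inr_Phi hT,
    prod_union_idem (fun p => by rw [← Unitization.inr_mul, iota_idem hactD])]

include hactD in
lemma Phi_emul (S T : Finset (Γ × Jd D)) : Phi (emul S T) = Phi S * Phi T := by
  unfold emul
  by_cases hS : S = ∅
  · simp [hS, Phi_empty]
  · by_cases hT : T = ∅
    · simp [hT, Phi_empty]
    · rw [if_neg (by tauto)]
      exact Phi_union hactD (Finset.nonempty_iff_ne_empty.mpr hS)
        (Finset.nonempty_iff_ne_empty.mpr hT)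

include hactD in
lemma Phi_insert {T : Finset (Γ × Jd D)} (hT : T.Nonempty) (p : Γ × Jd D) :
    Phi (Insert.insert p T) = (p.1 • (p.2 : D)) * Phi T := by
  rw [Finset.insert_eq, Phi_union hactD (Finset.singleton_nonempty p) hT, Phi_singleton]

include hactD in
lemma Phi_smul (g : Γ) (S : Finset (Γ × Jd D)) :
    Phi (Finset.image (fun p : Γ × Jd D => (g * p.1, p.2)) S) = g • Phi S := by
  rcases S.eq_empty_or_nonempty with rfl | hS
  · rw [Finset.image_empty]
    simp [Phi_empty]
  · induction hS using Finset.Nonempty.cons_induction with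
    | singleton p =>
      rw [Finset.image_singleton, Phi_singleton, Phi_singleton]
      exact mul_smul g p.1 (p.2 : D)
    | cons p S hp hS ih =>
      rw [Finset.cons_eq_insert, Finset.image_insert,
        Phi_insert hactD (hS.image _), ih,
        Phi_insert hactD hS, hactD, mul_smul]

end S7


theorem statement_7 {Γ D : Type} [Group Γ] [NonUnitalCommRing D] [DistribMulAction Γ D]
    (hTF : Monoid.IsTorsionFree Γ)
    (hD : NonUnitalAlgebra.adjoin ℤ {d : D | d * d = d} = ⊤)
    (hactD : ∀ (g : Γ) (x y : D), g • (x * y) = (g • x) * (g • y)) :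
    ∃ (E : Type) (_ : SemilatticeWithZero E) (_ : MulAction Γ E),
      IsGammaSL Γ E ∧
      (∀ (g : Γ) (e : E), e ≠ 0 → g • e = e → g = 1) ∧
      ∃ φ : ZE E →ₙ+* D, Function.Surjective φ ∧
        ∀ (g : Γ) (x : ZE E), φ (act g x) = g • φ x := by
    classical
  refine ⟨S7.EE Γ D, inferInstance, inferInstance, S7.EE.isGammaSL, S7.EE.free hTF, ?_⟩
  have hΦmul : ∀ S T : S7.EE Γ D, S7.Phi (S * T) = S7.Phi S * S7.Phi T := fun S T =>
    S7.Phi_emul hactD S T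
  set Φm : (S7.EE Γ D) →ₙ* D := ⟨S7.Phi, fun {S T} => hΦmul S T⟩ with hΦm
  set F : MonoidAlgebra ℤ (S7.EE Γ D) →ₙₐ[ℤ] D := MonoidAlgebra.liftMagma ℤ Φm with hF
  have hFsingle : ∀ (a : S7.EE Γ D) (c : ℤ), F (MonoidAlgebra.single a c) = c • S7.Phi a := by
    intro a c
    show (Finsupp.single a c).sum (fun m t => t • Φm m) = c • S7.Phi a
    rw [Finsupp.sum_single_index]
    · rfl
    · exact zero_smul ℤ _
  have hFzero : S7.Phi (0 : S7.EE Γ D) = 0 := S7.Phi_empty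
  have hFT : ∀ z : MonoidAlgebra ℤ (S7.EE Γ D), F (T z) = F z := by
    intro z
    unfold IndRes.T IndRes.sgl
    rw [map_sub, MonoidAlgebra.ofCoeff_single, hFsingle, hFzero, smul_zero, sub_zero]
  have hFdef : ∀ z : MonoidAlgebra ℤ (S7.EE Γ D),
      F z = z.coeff.sum (fun m t => t • S7.Phi m) := fun z => rfl
  refine ⟨{ toFun := fun x => F x.1,
            map_mul' := ?_, map_zero' := ?_, map_add' := ?_ }, ?_, ?_⟩
  · intro x y
    show F ((x * y).1) = F x.1 * F y.1
    rw [ZE.val_mul, hFT, map_mul]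
  · show F (0 : MonoidAlgebra ℤ (S7.EE Γ D)) = 0
    exact map_zero F
  · intro x y
    show F ((x + y).1) = F x.1 + F y.1
    rw [AddSubgroup.coe_add, map_add]
  · -- surjectivity
    have hsub : {d : D | d * d = d} ⊆ (NonUnitalAlgHom.range F : Set D) := by
      intro d hd
      refine ⟨MonoidAlgebra.single (S7.EE.ofF {((1 : Γ), ⟨d, hd⟩)}) 1, ?_⟩
      show F (MonoidAlgebra.single (S7.EE.ofF {((1 : Γ), ⟨d, hd⟩)}) 1) = d
      rw [hFsingle, one_smul]
      show S7.Phi ({((1 : Γ), ⟨d, hd⟩)} : Finset (Γ × S7.Jd D)) = d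
      rw [S7.Phi_singleton]
      exact one_smul Γ d
    have hle := NonUnitalAlgebra.adjoin_le hsub
    rw [hD] at hle
    intro d
    obtain ⟨z, hz⟩ := hle (show d ∈ (⊤ : NonUnitalSubalgebra ℤ D) from trivial)
    have hz' : F z = d := hz
    exact ⟨⟨T z, T_apply_zero z⟩, by show F (T z) = d; rw [hFT, hz']⟩
  · -- equivariance
    intro g x
    show F ((act g x).1) = g • F x.1
    show F (T (MonoidAlgebra.mapDomain (fun e : S7.EE Γ D => g • e) x.1)) = g • F x.1
    rw [hFT, hFdef, hFdef]
    refine Eq.trans (Finsupp.sum_mapDomain_index ?_ ?_) ?_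
    · intro a; simp
    · intro a b₁ b₂; simp [add_smul]
    rw [Finsupp.sum, Finsupp.sum, Finset.smul_sum]
    refine Finset.sum_congr rfl fun a _ => ?_
    have h1 : S7.Phi ((g • a : S7.EE Γ D)) = g • S7.Phi a := S7.Phi_smul hactD g a
    rw [h1]
    exact (map_zsmul (DistribMulAction.toAddMonoidHom D g) _ _).symm
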